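/- Let G and G' be achievement positional games on disjoint vertex sets. If o(G)=L and o(G')∈{L, L^-}, then o(G∪G')=L; in particular Left has a winning strategy on G∪G' as second player. -/

import Mathlib

namespace APG

/-- The two players: Left and Right. -/
inductive Player : Type
  | L : Player
  | R : Player
deriving DecidableEq, Repr

/-- The opponent of a player. -/
def Player.other : Player → Player
  | .L => .R
  | .R => .L

/-- An achievement positional game: a finite vertex set together with the set of
blue edges (Left's winning sets) and the set of red edges (Right's winning sets). -/
structure Game : Type where
  V : Finset ℕ
  EL : Finset (Finset ℕ)
  ER : Finset (Finset ℕ)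

/-- The edges are nonempty subsets of the vertex set. -/
def WellFormed (G : Game) : Prop :=
  (∀ e ∈ G.EL, e ⊆ G.V ∧ e.Nonempty) ∧ (∀ e ∈ G.ER, e ⊆ G.V ∧ e.Nonempty)

/-- The winning sets of a given player. -/
def Game.edges (G : Game) : Player → Finset (Finset ℕ)
  | .L => G.EL
  | .R => G.ER

/-- The player who makes the `i`-th move (0-indexed) when `s` moves first. -/
def mover (s : Player) (i : ℕ) : Player := if i % 2 = 0 then s else s.other

/-- The set of vertices picked by player `p` along the history `h`
(the chronological list of the moves played so far), when `s` moved first. -/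
def picked (s p : Player) (h : List ℕ) : Finset ℕ :=
  ((Finset.range h.length).filter fun i => mover s i = p).image fun i => h.getD i 0

/-- The set `S` of picked vertices fills some edge of `E`. -/
def fills (E : Finset (Finset ℕ)) (S : Finset ℕ) : Prop := ∃ e ∈ E, e ⊆ S

/-- The game is over: some player has picked all the vertices of one of their edges. -/
def ended (G : Game) (s : Player) (h : List ℕ) : Prop :=
  fills G.EL (picked s .L h) ∨ fills G.ER (picked s .R h)

/-- `h` is a legal history: no vertex is picked twice, every picked vertex belongs to
the board, and no move is made after the game has ended. -/
def ValidHist (G : Game) (s : Player) (h : List ℕ) : Prop :=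
  h.Nodup ∧ (∀ x ∈ h, x ∈ G.V) ∧ ∀ k, k < h.length → ¬ ended G s (h.take k)

/-- A strategy: a map assigning to each position (history) a vertex to pick. -/
abbrev Strategy := List ℕ → ℕ

/-- Along `h`, every move of player `p` agrees with the strategy `σ`. -/
def Follows (s p : Player) (σ : Strategy) (h : List ℕ) : Prop :=
  ∀ k, k < h.length → mover s k = p → h.getD k 0 = σ (h.take k)

/-- A finished play: either the game has ended or all vertices have been picked. -/
def Complete (G : Game) (s : Player) (h : List ℕ) : Prop :=
  ended G s h ∨ h.length = G.V.card

/-- The strategy `σ` of player `p` always suggests a legal move (an unpicked vertex)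
whenever the game is not over and it is `p`'s turn. -/
def Legal (G : Game) (s p : Player) (σ : Strategy) : Prop :=
  ∀ h, ValidHist G s h → Follows s p σ h → ¬ ended G s h → h.length < G.V.card →
    mover s h.length = p → σ h ∈ G.V ∧ σ h ∉ h

/-- Player `p` has a winning strategy on `G` when `s` moves first: following it,
every finished play ends with `p` having filled one of their edges (and, the game
having ended right there, the opponent has not filled an edge first). -/
def WinsAs (G : Game) (s p : Player) : Prop :=
  ∃ σ : Strategy, Legal G s p σ ∧
    ∀ h, ValidHist G s h → Follows s p σ h → Complete G s h →
      fills (G.edges p) (picked s p h)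

/-- Player `p` has a non-losing strategy on `G` when `s` moves first: following it,
the opponent never fills one of their edges. -/
def NonLosingAs (G : Game) (s p : Player) : Prop :=
  ∃ σ : Strategy, Legal G s p σ ∧
    ∀ h, ValidHist G s h → Follows s p σ h → Complete G s h →
      ¬ fills (G.edges p.other) (picked s p.other h)

/-- The possible results of the game, for a fixed starting player. -/
inductive Result : Type
  | Lwin : Result
  | draw : Result
  | Rwin : Result
deriving DecidableEq, Repr

/-- The result of `G` with optimal play, when `s` moves first, is `r`:
a win for a player means that player has a winning strategy, a draw means
both players have non-losing strategies. -/
def resultIs (G : Game) (s : Player) : Result → Prop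
  | .Lwin => WinsAs G s .L
  | .Rwin => WinsAs G s .R
  | .draw => NonLosingAs G s .L ∧ NonLosingAs G s .R

/-- An outcome: the pair of results with optimal play
(when Left starts, when Right starts). -/
abbrev Outcome := Result × Result

/-- `G` has outcome `o`. -/
def hasOutcome (G : Game) (o : Outcome) : Prop :=
  resultIs G .L o.1 ∧ resultIs G .R o.2

/-- Numerical value of a result, from Left's point of view:
Right wins < draw < Left wins. -/
def Result.val : Result → ℕ
  | .Rwin => 0
  | .draw => 1
  | .Lwin => 2

/-- The partial order `≤_L` on outcomes, comparing both components simultaneously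
from Left's point of view. -/
def outLE (o o' : Outcome) : Prop := o.1.val ≤ o'.1.val ∧ o.2.val ≤ o'.2.val

def oL : Outcome := (.Lwin, .Lwin)
def oLminus : Outcome := (.Lwin, .draw)
def oN : Outcome := (.Lwin, .Rwin)
def oD : Outcome := (.draw, .draw)
def oRminus : Outcome := (.draw, .Rwin)
def oR : Outcome := (.Rwin, .Rwin)

/-- The updated game `G_u` after Left has picked `u`. -/
def subL (G : Game) (u : ℕ) : Game where
  V := G.V.erase u
  EL := G.EL.image fun e => e.erase u
  ER := G.ER.filter fun e => u ∉ e

/-- The updated game `G^u` after Right has picked `u`. -/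
def subR (G : Game) (u : ℕ) : Game where
  V := G.V.erase u
  EL := G.EL.filter fun e => u ∉ e
  ER := G.ER.image fun e => e.erase u

/-- The updated game `G_u^v` after Left has picked `u` and Right has picked `v`. -/
def updLR (G : Game) (u v : ℕ) : Game where
  V := (G.V.erase u).erase v
  EL := (G.EL.filter fun e => v ∉ e).image fun e => e.erase u
  ER := (G.ER.filter fun e => u ∉ e).image fun e => e.erase v

/-- The disjoint union of two games. -/
def gunion (G G' : Game) : Game where
  V := G.V ∪ G'.V
  EL := G.EL ∪ G'.EL
  ER := G.ER ∪ G'.ER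


section Part1
variable {G : Game} {s p q t : Player} {x y : ℕ} {h l : List ℕ} {E : Finset (Finset ℕ)} {S T : Finset ℕ}

@[simp] theorem Player.other_other (p : Player) : p.other.other = p := by cases p <;> rfl

@[simp] theorem Player.other_ne (p : Player) : p.other ≠ p := by cases p <;> simp [Player.other]

@[simp] theorem Player.ne_other (p : Player) : p ≠ p.other := by cases p <;> simp [Player.other]

theorem Player.eq_or_eq_other (a b : Player) : a = b ∨ a = b.other := by
  cases a <;> cases b <;> simp [Player.other]

@[simp] theorem mover_zero (s : Player) : mover s 0 = s := by simp [mover]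

theorem mover_succ (s : Player) (k : ℕ) : mover s (k+1) = mover s.other k := by
  rcases Nat.mod_two_eq_zero_or_one k with hk | hk <;>
    simp [mover, Nat.add_mod, hk]

theorem mover_succ' (s : Player) (k : ℕ) : mover s (k+1) = (mover s k).other := by
  rcases Nat.mod_two_eq_zero_or_one k with hk | hk <;>
    simp [mover, Nat.add_mod, hk]

@[simp] theorem picked_nil (s p : Player) : picked s p [] = ∅ := by
  simp [picked]

theorem picked_cons (s p : Player) (x : ℕ) (l : List ℕ) :
    picked s p (x :: l) =
      if s = p then insert x (picked s.other p l) else picked s.other p l := by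
  ext y
  simp only [picked, Finset.mem_image, Finset.mem_filter, Finset.mem_range, List.length_cons]
  constructor
  · rintro ⟨i, ⟨hi, hm⟩, rfl⟩
    match i with
    | 0 =>
      simp only [mover_zero] at hm
      simp [hm, List.getD]
    | Nat.succ j =>
      rw [mover_succ] at hm
      have : (x :: l).getD (j+1) 0 = l.getD j 0 := by simp [List.getD]
      rw [this]
      have hj : j < l.length := by omega
      have hmem : l.getD j 0 ∈ picked s.other p l := by
        simp only [picked, Finset.mem_image, Finset.mem_filter, Finset.mem_range]
        exact ⟨j, ⟨hj, hm⟩, rfl⟩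
      by_cases hsp : s = p
      · rw [if_pos hsp]; exact Finset.mem_insert_of_mem hmem
      · rw [if_neg hsp]; exact hmem
  · intro hy
    by_cases hsp : s = p
    · rw [if_pos hsp] at hy
      rcases Finset.mem_insert.1 hy with rfl | hy
      · exact ⟨0, ⟨by omega, by simp [hsp]⟩, by simp [List.getD]⟩
      · simp only [picked, Finset.mem_image, Finset.mem_filter, Finset.mem_range] at hy
        rcases hy with ⟨j, ⟨hj, hm⟩, rfl⟩
        refine ⟨j+1, ⟨by omega, by rw [mover_succ]; exact hm⟩, by simp [List.getD]⟩
    · rw [if_neg hsp] at hy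
      simp only [picked, Finset.mem_image, Finset.mem_filter, Finset.mem_range] at hy
      rcases hy with ⟨j, ⟨hj, hm⟩, rfl⟩
      refine ⟨j+1, ⟨by omega, by rw [mover_succ]; exact hm⟩, by simp [List.getD]⟩

theorem picked_subset (hy : y ∈ picked s p l) : y ∈ l := by
  simp only [picked, Finset.mem_image, Finset.mem_filter, Finset.mem_range] at hy
  rcases hy with ⟨i, ⟨hi, _⟩, rfl⟩
  rw [List.getD_eq_getElem l 0 hi]
  exact List.getElem_mem _

theorem picked_cons_of_ne (hqs : q ≠ s) : picked s q (x :: l) = picked s.other q l := by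
  rw [picked_cons, if_neg (fun hh => hqs hh.symm)]

theorem picked_cons_self (s : Player) (x : ℕ) (l : List ℕ) :
    picked s s (x :: l) = insert x (picked s.other s l) := by
  rw [picked_cons, if_pos rfl]

/- fills lemmas -/
theorem fills_mono (hST : S ⊆ T) (hf : fills E S) : fills E T := by
  rcases hf with ⟨e, he, hes⟩; exact ⟨e, he, hes.trans hST⟩

@[simp] theorem fills_empty_iff : fills E ∅ ↔ ∅ ∈ E := by
  constructor
  · rintro ⟨e, he, hes⟩; rwa [Finset.subset_empty.1 hes] at he
  · intro h0; exact ⟨∅, h0, by simp⟩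

theorem fills_image_erase : fills (E.image fun e => e.erase x) S ↔ fills E (insert x S) := by
  constructor
  · rintro ⟨e', he', hes⟩
    rcases Finset.mem_image.1 he' with ⟨e, he, rfl⟩
    refine ⟨e, he, fun a ha => ?_⟩
    by_cases hax : a = x
    · simp [hax]
    · exact Finset.mem_insert_of_mem (hes (Finset.mem_erase.2 ⟨hax, ha⟩))
  · rintro ⟨e, he, hes⟩
    refine ⟨e.erase x, Finset.mem_image_of_mem _ he, fun a ha => ?_⟩
    rcases Finset.mem_erase.1 ha with ⟨hax, hae⟩
    rcases Finset.mem_insert.1 (hes hae) with rfl | h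
    · exact absurd rfl hax
    · exact h

theorem fills_filter_of_not_mem (hx : x ∉ S) :
    fills (E.filter fun e => x ∉ e) S ↔ fills E S := by
  constructor
  · rintro ⟨e, he, hes⟩; exact ⟨e, (Finset.mem_filter.1 he).1, hes⟩
  · rintro ⟨e, he, hes⟩
    exact ⟨e, Finset.mem_filter.2 ⟨he, fun hxe => hx (hes hxe)⟩, hes⟩

end Part1

section Part2
variable {G : Game} {s p q t : Player} {x y : ℕ} {E : Finset (Finset ℕ)} {S : Finset ℕ}

/-- The game after player `p` picks `x`. -/
def subP : Player → Game → ℕ → Game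
  | .L => subL
  | .R => subR

/-- Player `p` has filled one of their edges. -/
def Won (G : Game) (p : Player) : Prop := ∅ ∈ G.edges p

@[simp] theorem subP_V (p : Player) (G : Game) (x : ℕ) : (subP p G x).V = G.V.erase x := by
  cases p <;> rfl

theorem subP_edges_self (p : Player) (G : Game) (x : ℕ) :
    (subP p G x).edges p = (G.edges p).image fun e => e.erase x := by
  cases p <;> rfl

theorem subP_edges_other (p : Player) (G : Game) (x : ℕ) :
    (subP p G x).edges p.other = (G.edges p.other).filter fun e => x ∉ e := by
  cases p <;> rfl

theorem subP_edges_other' (hqp : q ≠ p) (G : Game) (x : ℕ) :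
    (subP p G x).edges q = (G.edges q).filter fun e => x ∉ e := by
  cases p <;> cases q <;> first | rfl | exact absurd rfl hqp

theorem subP_card_lt (hx : x ∈ G.V) (p : Player) : (subP p G x).V.card < G.V.card := by
  rw [subP_V]; exact Finset.card_erase_lt_of_mem hx

theorem won_subP_self_iff : Won (subP p G x) p ↔ fills (G.edges p) {x} := by
  rw [Won, subP_edges_self]
  rw [show (∅ ∈ (G.edges p).image fun e => e.erase x) ↔
      fills ((G.edges p).image fun e => e.erase x) ∅ from fills_empty_iff.symm,
    fills_image_erase]
  simp

theorem won_subP_other (hqp : q ≠ p) (hw : Won (subP p G x) q) : Won G q := by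
  rw [Won, subP_edges_other' hqp] at hw
  exact (Finset.mem_filter.1 hw).1

theorem not_won_of_wf (hwf : WellFormed G) (p : Player) : ¬ Won G p := by
  intro hw
  cases p
  · exact absurd (hwf.1 ∅ hw).2 (by simp)
  · exact absurd (hwf.2 ∅ hw).2 (by simp)

theorem wf_edges (hwf : WellFormed G) (p : Player) : ∀ e ∈ G.edges p, e ⊆ G.V ∧ e.Nonempty := by
  cases p
  · exact hwf.1
  · exact hwf.2

theorem wf_subP (hwf : WellFormed G) (hnw : ¬ Won (subP p G x) p) :
    WellFormed (subP p G x) := by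
  have hself : ∀ e ∈ (subP p G x).edges p, e ⊆ (subP p G x).V ∧ e.Nonempty := by
    intro e he
    rw [subP_edges_self] at he
    rcases Finset.mem_image.1 he with ⟨e', he', rfl⟩
    constructor
    · rw [subP_V]
      exact Finset.erase_subset_erase _ (wf_edges hwf p e' he').1
    · rcases Finset.eq_empty_or_nonempty (e'.erase x) with hemp | hne
      · exact absurd (by rw [Won, subP_edges_self, ← hemp]; exact Finset.mem_image_of_mem _ he') hnw
      · exact hne
  have hother : ∀ e ∈ (subP p G x).edges p.other, e ⊆ (subP p G x).V ∧ e.Nonempty := by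
    intro e he
    rw [subP_edges_other] at he
    rcases Finset.mem_filter.1 he with ⟨he, hxe⟩
    refine ⟨?_, (wf_edges hwf p.other e he).2⟩
    rw [subP_V]
    intro a ha
    exact Finset.mem_erase.2 ⟨fun hax => hxe (hax ▸ ha), (wf_edges hwf p.other e he).1 ha⟩
  constructor
  · intro e he
    cases p
    · exact hself e he
    · exact hother e he
  · intro e he
    cases p
    · exact hother e he
    · exact hself e he

/-- `p` has a winning strategy with `t` to move (inductive/positional form). -/
def Wp (G : Game) (p t : Player) : Prop :=
  if t = p then ∃ x, ∃ _ : x ∈ G.V, (Won (subP t G x) p ∨ Wp (subP t G x) p t.other)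
  else G.V.Nonempty ∧ ∀ x ∈ G.V, ¬ Won (subP t G x) t ∧ Wp (subP t G x) p t.other
termination_by G.V.card
decreasing_by
  · exact subP_card_lt (by assumption) t
  · exact subP_card_lt (by assumption) t

/-- `p` has a non-losing strategy with `t` to move (inductive/positional form). -/
def NLp (G : Game) (p t : Player) : Prop :=
  if t = p then G.V = ∅ ∨ ∃ x, ∃ _ : x ∈ G.V, (Won (subP t G x) p ∨ NLp (subP t G x) p t.other)
  else ∀ x ∈ G.V, ¬ Won (subP t G x) t ∧ NLp (subP t G x) p t.other
termination_by G.V.card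
decreasing_by
  · exact subP_card_lt (by assumption) t
  · exact subP_card_lt (by assumption) t

theorem Wp_self (G : Game) (p : Player) :
    Wp G p p ↔ ∃ x, x ∈ G.V ∧ (Won (subP p G x) p ∨ Wp (subP p G x) p p.other) := by
  rw [Wp]; simp [exists_prop]

theorem Wp_other (G : Game) (p : Player) :
    Wp G p p.other ↔ G.V.Nonempty ∧
      ∀ x ∈ G.V, ¬ Won (subP p.other G x) p.other ∧ Wp (subP p.other G x) p p := by
  rw [Wp, if_neg (Player.other_ne p)]
  simp

theorem NLp_self (G : Game) (p : Player) :
    NLp G p p ↔ G.V = ∅ ∨ ∃ x, x ∈ G.V ∧ (Won (subP p G x) p ∨ NLp (subP p G x) p p.other) := by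
  rw [NLp]; simp [exists_prop]

theorem NLp_other (G : Game) (p : Player) :
    NLp G p p.other ↔
      ∀ x ∈ G.V, ¬ Won (subP p.other G x) p.other ∧ NLp (subP p.other G x) p p := by
  rw [NLp, if_neg (Player.other_ne p)]
  simp

theorem wp_nlp (G : Game) (p t : Player) (h : Wp G p t) : NLp G p t := by
  rw [Wp] at h
  rw [NLp]
  split at h
  · rw [if_pos (by assumption)]
    rcases h with ⟨x, hx, hwon | hwp⟩
    · exact Or.inr ⟨x, hx, Or.inl hwon⟩
    · exact Or.inr ⟨x, hx, Or.inr (wp_nlp _ _ _ hwp)⟩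
  · rw [if_neg (by assumption)]
    intro x hx
    exact ⟨(h.2 x hx).1, wp_nlp _ _ _ (h.2 x hx).2⟩
termination_by G.V.card
decreasing_by
  all_goals exact subP_card_lt hx t

end Part2

section Part3
variable {G : Game} {s p q t : Player} {x y : ℕ} {E : Finset (Finset ℕ)} {S : Finset ℕ}

theorem Game.ext' {G H : Game} (hV : G.V = H.V) (hEL : G.EL = H.EL) (hER : G.ER = H.ER) :
    G = H := by
  cases G; cases H; simp_all

theorem erase_image_comm (E : Finset (Finset ℕ)) (x y : ℕ) :
    ((E.image fun e => e.erase y).image fun e => e.erase x) =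
      (E.image fun e => e.erase x).image fun e => e.erase y := by
  rw [Finset.image_image, Finset.image_image]
  refine Finset.image_congr fun e _ => ?_
  simp only [Function.comp_apply]
  exact Finset.erase_right_comm

theorem filter_image_erase_comm (hyx : y ≠ x) (E : Finset (Finset ℕ)) :
    ((E.image fun e => e.erase x).filter fun e => y ∉ e) =
      (E.filter fun e => y ∉ e).image fun e => e.erase x := by
  ext e'
  simp only [Finset.mem_filter, Finset.mem_image]
  constructor
  · rintro ⟨⟨e, he, rfl⟩, hy⟩
    exact ⟨e, ⟨he, fun hye => hy (Finset.mem_erase.2 ⟨hyx, hye⟩)⟩, rfl⟩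
  · rintro ⟨e, ⟨he, hye⟩, rfl⟩
    exact ⟨⟨e, he, rfl⟩, fun hy => hye (Finset.mem_of_mem_erase hy)⟩

theorem subP_comm (hxy : x ≠ y) (p q : Player) (G : Game) :
    subP p (subP q G y) x = subP q (subP p G x) y := by
  have hV : ((G.V.erase y).erase x) = ((G.V.erase x).erase y) := Finset.erase_right_comm
  cases p <;> cases q <;> refine Game.ext' ?_ ?_ ?_ <;>
    simp only [subP, subL, subR]
  · exact hV
  · exact erase_image_comm G.EL x y
  · exact Finset.filter_comm _ _ _
  · exact hV
  · exact (filter_image_erase_comm hxy.symm G.EL).symm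
  · exact filter_image_erase_comm hxy G.ER
  · exact hV
  · exact filter_image_erase_comm hxy G.EL
  · exact (filter_image_erase_comm hxy.symm G.ER).symm
  · exact hV
  · exact Finset.filter_comm _ _ _
  · exact erase_image_comm G.ER x y

theorem won_subP_self_of_won (hw : Won G p) (x : ℕ) : Won (subP p G x) p := by
  rw [Won, subP_edges_self]
  have : (∅ : Finset ℕ) = (∅ : Finset ℕ).erase x := by simp
  rw [this]
  exact Finset.mem_image_of_mem _ hw

theorem won_of_won_sub_filter (hqp : q ≠ p) (hw : Won (subP p (subP q G y) x) p) :
    Won (subP p G x) p := by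
  rw [won_subP_self_iff] at hw ⊢
  rw [subP_edges_other' (by exact fun h => hqp h.symm)] at hw
  rcases hw with ⟨e, he, hes⟩
  exact ⟨e, (Finset.mem_filter.1 he).1, hes⟩

theorem wp_mono (G : Game) (p t : Player) (x : ℕ) (hx : x ∈ G.V) (h : Wp G p t) :
    Won (subP p G x) p ∨ Wp (subP p G x) p t := by
  by_cases hw : Won (subP p G x) p
  · exact Or.inl hw
  right
  by_cases htp : t = p
  · subst htp
    rw [Wp_self] at h ⊢
    rcases h with ⟨z, hz, hdisj⟩
    by_cases hzx : z = x
    · subst hzx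
      rcases hdisj with hwon | hwp'
      · exact absurd hwon hw
      · rcases (Wp_other _ _).1 hwp' with ⟨⟨y, hy⟩, _⟩
        exact ⟨y, hy, wp_mono (subP t G z) t t.other y hy hwp'⟩
    · refine ⟨z, by rw [subP_V]; exact Finset.mem_erase.2 ⟨hzx, hz⟩, ?_⟩
      rw [subP_comm hzx t t]
      rcases hdisj with hwon | hwp'
      · exact Or.inl (won_subP_self_of_won hwon x)
      · exact wp_mono (subP t G z) t t.other x
          (by rw [subP_V]; exact Finset.mem_erase.2 ⟨fun hh => hzx hh.symm, hx⟩) hwp'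
  · have htp' : t = p.other := by cases t <;> cases p <;> simp_all [Player.other]
    subst htp'
    rw [Wp_other] at h ⊢
    rcases h with ⟨hne, hall⟩
    constructor
    · rcases Finset.eq_empty_or_nonempty ((subP p G x).V) with hemp | hne'
      · exfalso
        rcases (Wp_self _ _).1 (hall x hx).2 with ⟨w, hw', _⟩
        rw [subP_V] at hemp hw'
        have hwx : w ∈ G.V.erase x := hw'
        -- G.V.erase x = ∅ : but w ∈ (subP p.other G x).V = G.V.erase x
        rw [hemp] at hwx
        exact absurd hwx (Finset.notMem_empty w)
      · exact hne'
    · intro z hz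
      rw [subP_V] at hz
      rcases Finset.mem_erase.1 hz with ⟨hzx, hzV⟩
      rcases hall z hzV with ⟨hnw_z, hwp_z⟩
      rw [subP_comm hzx p.other p]  -- ?
      constructor
      · intro hwon
        exact hnw_z (won_subP_other (Player.other_ne p) hwon)
      · rcases wp_mono (subP p.other G z) p p x
          (by rw [subP_V]; exact Finset.mem_erase.2 ⟨fun hh => hzx hh.symm, hx⟩) hwp_z with
          hwon | hwp''
        · exact absurd (won_of_won_sub_filter (Player.other_ne p) hwon) hw
        · exact hwp''
termination_by G.V.card
decreasing_by
  all_goals exact subP_card_lt (by assumption) _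

theorem wp_em (G : Game) (p : Player) (h : Wp G p p.other) : Wp G p p := by
  rcases (Wp_other _ _).1 h with ⟨⟨y, hy⟩, _⟩
  exact (Wp_self _ _).2 ⟨y, hy, wp_mono G p p.other y hy h⟩

end Part3

section Part4
variable {G G' : Game} {p q t : Player} {x y : ℕ}

@[simp] theorem Player.other_L : Player.L.other = Player.R := rfl
@[simp] theorem Player.other_R : Player.R.other = Player.L := rfl

theorem gunion_V : (gunion G G').V = G.V ∪ G'.V := rfl

theorem gunion_edges (q : Player) : (gunion G G').edges q = G.edges q ∪ G'.edges q := by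
  cases q <;> rfl

theorem won_gunion_iff : Won (gunion G G') q ↔ Won G q ∨ Won G' q := by
  rw [Won, gunion_edges]; exact Finset.mem_union

theorem wf_no_mem_edge (hwf : WellFormed G') (he : e ∈ G'.edges q) (hx : x ∉ G'.V) :
    x ∉ e :=
  fun hxe => hx ((wf_edges hwf q e he).1 hxe)

theorem subP_gunion_left (hx : x ∈ G.V) (hx' : x ∉ G'.V) (hwf' : WellFormed G')
    (p : Player) : subP p (gunion G G') x = gunion (subP p G x) G' := by
  have himg : ∀ q : Player, (G'.edges q).image (fun e => e.erase x) = G'.edges q := by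
    intro q
    rw [show (G'.edges q).image (fun e => e.erase x) =
        (G'.edges q).image id from Finset.image_congr
          (fun e he => Finset.erase_eq_of_notMem (wf_no_mem_edge hwf' he hx'))]
    exact Finset.image_id
  have hflt : ∀ q : Player, (G'.edges q).filter (fun e => x ∉ e) = G'.edges q :=
    fun q => Finset.filter_true_of_mem (fun e he => wf_no_mem_edge hwf' he hx')
  have hV : (G.V ∪ G'.V).erase x = G.V.erase x ∪ G'.V := by
    rw [Finset.erase_union_distrib, Finset.erase_eq_of_notMem hx']
  cases p
  · refine Game.ext' hV ?_ ?_
    · show ((G.EL ∪ G'.EL).image fun e => e.erase x) = (G.EL.image fun e => e.erase x) ∪ G'.EL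
      rw [Finset.image_union, show G'.EL = G'.edges .L from rfl, himg .L]
    · show ((G.ER ∪ G'.ER).filter fun e => x ∉ e) = (G.ER.filter fun e => x ∉ e) ∪ G'.ER
      rw [Finset.filter_union, show G'.ER = G'.edges .R from rfl, hflt .R]
  · refine Game.ext' hV ?_ ?_
    · show ((G.EL ∪ G'.EL).filter fun e => x ∉ e) = (G.EL.filter fun e => x ∉ e) ∪ G'.EL
      rw [Finset.filter_union, show G'.EL = G'.edges .L from rfl, hflt .L]
    · show ((G.ER ∪ G'.ER).image fun e => e.erase x) = (G.ER.image fun e => e.erase x) ∪ G'.ER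
      rw [Finset.image_union, show G'.ER = G'.edges .R from rfl, himg .R]

theorem subP_gunion_right (hx' : x ∈ G'.V) (hx : x ∉ G.V) (hwf : WellFormed G)
    (p : Player) : subP p (gunion G G') x = gunion G (subP p G' x) := by
  have himg : ∀ q : Player, (G.edges q).image (fun e => e.erase x) = G.edges q := by
    intro q
    rw [show (G.edges q).image (fun e => e.erase x) =
        (G.edges q).image id from Finset.image_congr
          (fun e he => Finset.erase_eq_of_notMem (wf_no_mem_edge hwf he hx))]
    exact Finset.image_id
  have hflt : ∀ q : Player, (G.edges q).filter (fun e => x ∉ e) = G.edges q :=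
    fun q => Finset.filter_true_of_mem (fun e he => wf_no_mem_edge hwf he hx)
  have hV : (G.V ∪ G'.V).erase x = G.V ∪ G'.V.erase x := by
    rw [Finset.erase_union_distrib, Finset.erase_eq_of_notMem hx]
  cases p
  · refine Game.ext' hV ?_ ?_
    · show ((G.EL ∪ G'.EL).image fun e => e.erase x) = G.EL ∪ (G'.EL.image fun e => e.erase x)
      rw [Finset.image_union, show G.EL = G.edges .L from rfl, himg .L]
    · show ((G.ER ∪ G'.ER).filter fun e => x ∉ e) = G.ER ∪ (G'.ER.filter fun e => x ∉ e)
      rw [Finset.filter_union, show G.ER = G.edges .R from rfl, hflt .R]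
  · refine Game.ext' hV ?_ ?_
    · show ((G.EL ∪ G'.EL).filter fun e => x ∉ e) = G.EL ∪ (G'.EL.filter fun e => x ∉ e)
      rw [Finset.filter_union, show G.EL = G.edges .L from rfl, hflt .L]
    · show ((G.ER ∪ G'.ER).image fun e => e.erase x) = G.ER ∪ (G'.ER.image fun e => e.erase x)
      rw [Finset.image_union, show G.ER = G.edges .R from rfl, himg .R]

theorem gunion_empty (hwf' : WellFormed G') (hV : G'.V = ∅) : gunion G G' = G := by
  have hE : ∀ q : Player, G'.edges q = ∅ := by
    intro q
    refine Finset.eq_empty_of_forall_notMem fun e he => ?_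
    rcases wf_edges hwf' q e he with ⟨hsub, ⟨a, ha⟩⟩
    rw [hV] at hsub
    exact absurd (hsub ha) (Finset.notMem_empty a)
  refine Game.ext' ?_ ?_ ?_
  · show G.V ∪ G'.V = G.V
    rw [hV, Finset.union_empty]
  · show G.EL ∪ G'.EL = G.EL
    rw [show G'.EL = G'.edges .L from rfl, hE .L, Finset.union_empty]
  · show G.ER ∪ G'.ER = G.ER
    rw [show G'.ER = G'.edges .R from rfl, hE .R, Finset.union_empty]

theorem combo (G G' : Game) (hwf : WellFormed G) (hwf' : WellFormed G')
    (hdisj : Disjoint G.V G'.V) (hA1 : Wp G .L .L) (hA2 : Wp G .L .R)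
    (hB : NLp G' .L .R) :
    Wp (gunion G G') .L .L ∧ Wp (gunion G G') .L .R := by
  constructor
  · -- Left to move
    rcases (Wp_self G .L).1 hA1 with ⟨x, hx, hd⟩
    apply (Wp_self _ .L).2
    have hxnG' : x ∉ G'.V := Finset.disjoint_left.1 hdisj hx
    refine ⟨x, Finset.mem_union_left _ hx, ?_⟩
    rw [subP_gunion_left hx hxnG' hwf' .L]
    by_cases hw2 : Won (subP .L G x) .L
    · exact Or.inl (won_gunion_iff.2 (Or.inl hw2))
    · have hwpR : Wp (subP .L G x) .L .R := by
        rcases hd with hh | hh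
        · exact absurd hh hw2
        · exact hh
      right
      exact (combo (subP .L G x) G' (wf_subP hwf hw2) hwf'
        (Disjoint.mono_left (by rw [subP_V]; exact Finset.erase_subset _ _) hdisj)
        (wp_em _ _ hwpR) hwpR hB).2
  · -- Right to move
    apply (Wp_other (gunion G G') .L).2
    constructor
    · rcases (Wp_other G .L).1 hA2 with ⟨⟨v, hv⟩, _⟩
      exact ⟨v, Finset.mem_union_left _ hv⟩
    · intro x hx
      rcases Finset.mem_union.1 hx with hxG | hxG'
      · -- Right moves in G
        have hxnG' : x ∉ G'.V := Finset.disjoint_left.1 hdisj hxG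
        rw [subP_gunion_left hxG hxnG' hwf' _]
        rcases (Wp_other G .L).1 hA2 with ⟨_, hall⟩
        rcases hall x hxG with ⟨hnw, hwpLL⟩
        constructor
        · intro hwon
          rcases won_gunion_iff.1 hwon with h1 | h2
          · exact hnw h1
          · exact not_won_of_wf hwf' _ h2
        · have hwfH : WellFormed (subP Player.L.other G x) := wf_subP hwf hnw
          rcases (Wp_self (subP Player.L.other G x) .L).1 hwpLL with ⟨y, hy, hd2⟩
          apply (Wp_self _ .L).2
          refine ⟨y, Finset.mem_union_left _ hy, ?_⟩
          have hyG : y ∈ G.V := by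
            rw [subP_V] at hy
            exact Finset.mem_of_mem_erase hy
          have hynG' : y ∉ G'.V := Finset.disjoint_left.1 hdisj hyG
          rw [subP_gunion_left hy hynG' hwf' .L]
          by_cases hw2 : Won (subP .L (subP Player.L.other G x) y) .L
          · exact Or.inl (won_gunion_iff.2 (Or.inl hw2))
          · have hwpR2 : Wp (subP .L (subP Player.L.other G x) y) .L .R := by
              rcases hd2 with hh | hh
              · exact absurd hh hw2
              · exact hh
            right
            exact (combo (subP .L (subP Player.L.other G x) y) G'
              (wf_subP hwfH hw2) hwf'
              (Disjoint.mono_left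
                (by rw [subP_V, subP_V]
                    exact (Finset.erase_subset _ _).trans (Finset.erase_subset _ _)) hdisj)
              (wp_em _ _ hwpR2) hwpR2 hB).2
      · -- Right moves in G'
        have hxnG : x ∉ G.V := Finset.disjoint_right.1 hdisj hxG'
        rw [subP_gunion_right hxG' hxnG hwf _]
        rcases (NLp_other G' .L).1 hB x hxG' with ⟨hnw', hnlLL⟩
        constructor
        · intro hwon
          rcases won_gunion_iff.1 hwon with h1 | h2
          · exact not_won_of_wf hwf _ h1
          · exact hnw' h2
        · have hwfG'' : WellFormed (subP Player.L.other G' x) := wf_subP hwf' hnw'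
          rcases (NLp_self (subP Player.L.other G' x) .L).1 hnlLL with hemp | ⟨y, hy, hd2⟩
          · rw [gunion_empty hwfG'' (by rw [subP_V] at hemp ⊢; exact hemp)]
            exact hA1
          · apply (Wp_self _ .L).2
            refine ⟨y, Finset.mem_union_right _ hy, ?_⟩
            have hyG' : y ∈ G'.V := by
              rw [subP_V] at hy
              exact Finset.mem_of_mem_erase hy
            have hynG : y ∉ G.V := Finset.disjoint_right.1 hdisj hyG'
            rw [subP_gunion_right hy hynG hwf .L]
            by_cases hw2 : Won (subP .L (subP Player.L.other G' x) y) .L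
            · exact Or.inl (won_gunion_iff.2 (Or.inr hw2))
            · have hnl2 : NLp (subP .L (subP Player.L.other G' x) y) .L .R := by
                rcases hd2 with hh | hh
                · exact absurd hh hw2
                · exact hh
              right
              exact (combo G (subP .L (subP Player.L.other G' x) y) hwf
                (wf_subP hwfG'' hw2)
                (Disjoint.mono_right
                  (by rw [subP_V, subP_V]
                      exact (Finset.erase_subset _ _).trans (Finset.erase_subset _ _)) hdisj)
                hA1 hA2 hnl2).2
termination_by G.V.card + G'.V.card
decreasing_by
  · have h1 : (subP .L G x).V.card < G.V.card := subP_card_lt hx .L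
    omega
  · have h1 : (subP Player.L.other G x).V.card < G.V.card := subP_card_lt hxG _
    have h2 : (subP .L (subP Player.L.other G x) y).V.card <
        (subP Player.L.other G x).V.card := subP_card_lt hy .L
    omega
  · have h1 : (subP Player.L.other G' x).V.card < G'.V.card := subP_card_lt hxG' _
    have h2 : (subP .L (subP Player.L.other G' x) y).V.card <
        (subP Player.L.other G' x).V.card := subP_card_lt hy .L
    omega

end Part4

section Part5
variable {G : Game} {s p q t : Player} {x y : ℕ} {l h : List ℕ} {σ : Strategy}

theorem not_ended_nil (hwf : WellFormed G) (s : Player) : ¬ ended G s [] := by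
  rintro (⟨e, he, hes⟩ | ⟨e, he, hes⟩)
  · rw [picked_nil] at hes
    rcases (hwf.1 e he).2 with ⟨a, ha⟩
    exact absurd (hes ha) (Finset.notMem_empty a)
  · rw [picked_nil] at hes
    rcases (hwf.2 e he).2 with ⟨a, ha⟩
    exact absurd (hes ha) (Finset.notMem_empty a)

theorem fills_picked_cons (hxl : x ∉ l) (q : Player) :
    fills ((subP s G x).edges q) (picked s.other q l) ↔
      fills (G.edges q) (picked s q (x :: l)) := by
  rcases Player.eq_or_eq_other q s with rfl | rfl
  · rw [subP_edges_self, picked_cons_self, fills_image_erase]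
  · rw [subP_edges_other, picked_cons_of_ne (Player.other_ne s),
      fills_filter_of_not_mem (fun hmem => hxl (picked_subset hmem))]

theorem fills_to_ended (hf : fills (G.edges q) (picked t q h)) : ended G t h := by
  cases q
  · exact Or.inl hf
  · exact Or.inr hf

theorem ended_cons (hxl : x ∉ l) : ended (subP s G x) s.other l ↔ ended G s (x :: l) :=
  or_congr (fills_picked_cons hxl .L) (fills_picked_cons hxl .R)

theorem picked_singleton_self (t : Player) (x : ℕ) : picked t t [x] = {x} := by
  rw [picked_cons_self, picked_nil]
  rfl

theorem picked_singleton_other (hqt : q ≠ t) (x : ℕ) : picked t q [x] = ∅ := by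
  rw [picked_cons_of_ne hqt, picked_nil]

theorem valid_nil (G : Game) (s : Player) : ValidHist G s [] :=
  ⟨List.nodup_nil, by simp, fun k hk => by simp at hk⟩

theorem follows_nil (σ : Strategy) : Follows s p σ [] := by
  intro k hk
  simp at hk

theorem valid_cons (hwf : WellFormed G) (hx : x ∈ G.V)
    (hv : ValidHist (subP s G x) s.other l) : ValidHist G s (x :: l) := by
  obtain ⟨hnd, hmem, hend⟩ := hv
  have hxl : x ∉ l := by
    intro hh
    have := hmem x hh
    rw [subP_V] at this
    exact (Finset.mem_erase.1 this).1 rfl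
  refine ⟨List.nodup_cons.2 ⟨hxl, hnd⟩, ?_, ?_⟩
  · intro a ha
    rcases List.mem_cons.1 ha with rfl | ha
    · exact hx
    · have := hmem a ha
      rw [subP_V] at this
      exact Finset.mem_of_mem_erase this
  · intro k hk
    match k with
    | 0 => exact not_ended_nil hwf s
    | Nat.succ k =>
      have hk' : k < l.length := by
        simp only [List.length_cons] at hk
        omega
      have htake : (x :: l).take (k + 1) = x :: l.take k := rfl
      rw [htake, ← ended_cons (fun hh => hxl (List.take_subset _ _ hh))]
      exact hend k hk'

theorem follows_cons (σ : Strategy) (hbase : mover s 0 = p → x = σ [])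
    (hf : Follows s.other p (fun l' => σ (x :: l')) l) : Follows s p σ (x :: l) := by
  intro k hk hm
  match k with
  | 0 => simpa using hbase hm
  | Nat.succ k =>
    have hm' : mover s.other k = p := by rw [← mover_succ]; exact hm
    have hk' : k < l.length := by
      simp only [List.length_cons] at hk
      omega
    have := hf k hk' hm'
    simpa [List.getD] using this

theorem complete_cons (hx : x ∈ G.V) (hxl : x ∉ l)
    (hc : Complete (subP s G x) s.other l) : Complete G s (x :: l) := by
  rcases hc with hend | hlen
  · exact Or.inl ((ended_cons hxl).1 hend)
  · right
    rw [subP_V, Finset.card_erase_of_mem hx] at hlen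
    have : 0 < G.V.card := Finset.card_pos.2 ⟨x, hx⟩
    rw [List.length_cons, hlen]
    omega

theorem winsAs_step (hwf : WellFormed G) (hx : x ∈ G.V) (hσleg : Legal G s p σ)
    (hσwin : ∀ h, ValidHist G s h → Follows s p σ h → Complete G s h →
      fills (G.edges p) (picked s p h))
    (hbase : mover s 0 = p → x = σ []) :
    WinsAs (subP s G x) s.other p := by
  refine ⟨fun l => σ (x :: l), ?_, ?_⟩
  · intro l hv hf hne hlen hm
    have hv' := valid_cons hwf hx hv
    have hf' := follows_cons σ hbase hf
    have hxl : x ∉ l := (List.nodup_cons.1 hv'.1).1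
    have hne' : ¬ ended G s (x :: l) := fun hh => hne ((ended_cons hxl).2 hh)
    have hcard : 0 < G.V.card := Finset.card_pos.2 ⟨x, hx⟩
    have hlen' : (x :: l).length < G.V.card := by
      rw [subP_V, Finset.card_erase_of_mem hx] at hlen
      rw [List.length_cons]
      omega
    have hm' : mover s (x :: l).length = p := by
      rw [List.length_cons, mover_succ]
      exact hm
    obtain ⟨h1, h2⟩ := hσleg (x :: l) hv' hf' hne' hlen' hm'
    refine ⟨?_, fun hh => h2 (List.mem_cons_of_mem _ hh)⟩
    rw [subP_V]
    exact Finset.mem_erase.2 ⟨fun heq => h2 (List.mem_cons.2 (Or.inl heq)), h1⟩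
  · intro l hv hf hc
    have hv' := valid_cons hwf hx hv
    have hxl : x ∉ l := (List.nodup_cons.1 hv'.1).1
    have := hσwin (x :: l) hv' (follows_cons σ hbase hf) (complete_cons hx hxl hc)
    exact (fills_picked_cons hxl p).2 this

theorem nonLosing_step (hwf : WellFormed G) (hx : x ∈ G.V) (hσleg : Legal G s p σ)
    (hσnl : ∀ h, ValidHist G s h → Follows s p σ h → Complete G s h →
      ¬ fills (G.edges p.other) (picked s p.other h))
    (hbase : mover s 0 = p → x = σ []) :
    NonLosingAs (subP s G x) s.other p := by
  refine ⟨fun l => σ (x :: l), ?_, ?_⟩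
  · intro l hv hf hne hlen hm
    have hv' := valid_cons hwf hx hv
    have hf' := follows_cons σ hbase hf
    have hxl : x ∉ l := (List.nodup_cons.1 hv'.1).1
    have hne' : ¬ ended G s (x :: l) := fun hh => hne ((ended_cons hxl).2 hh)
    have hcard : 0 < G.V.card := Finset.card_pos.2 ⟨x, hx⟩
    have hlen' : (x :: l).length < G.V.card := by
      rw [subP_V, Finset.card_erase_of_mem hx] at hlen
      rw [List.length_cons]
      omega
    have hm' : mover s (x :: l).length = p := by
      rw [List.length_cons, mover_succ]
      exact hm
    obtain ⟨h1, h2⟩ := hσleg (x :: l) hv' hf' hne' hlen' hm'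
    refine ⟨?_, fun hh => h2 (List.mem_cons_of_mem _ hh)⟩
    rw [subP_V]
    exact Finset.mem_erase.2 ⟨fun heq => h2 (List.mem_cons.2 (Or.inl heq)), h1⟩
  · intro l hv hf hc hfill
    have hv' := valid_cons hwf hx hv
    have hxl : x ∉ l := (List.nodup_cons.1 hv'.1).1
    exact hσnl (x :: l) hv' (follows_cons σ hbase hf) (complete_cons hx hxl hc)
      ((fills_picked_cons hxl p.other).1 hfill)

theorem winsAs_wp (G : Game) (s p : Player) (hwf : WellFormed G) (h : WinsAs G s p) :
    Wp G p s := by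
  obtain ⟨σ, hleg, hwin⟩ := h
  have hVne : G.V.Nonempty := by
    rcases Finset.eq_empty_or_nonempty G.V with hemp | hne
    · exfalso
      have hcomp : Complete G s [] := Or.inr (by simp [hemp])
      have hfl := hwin [] (valid_nil G s) (follows_nil σ) hcomp
      rcases hfl with ⟨e, he, hes⟩
      rw [picked_nil] at hes
      rcases (wf_edges hwf p e he).2 with ⟨a, ha⟩
      exact absurd (hes ha) (Finset.notMem_empty a)
    · exact hne
  by_cases hsp : s = p
  · subst hsp
    obtain ⟨hxV, -⟩ := hleg [] (valid_nil G s) (follows_nil σ) (not_ended_nil hwf s)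
      (by simpa using Finset.card_pos.2 hVne) (mover_zero s)
    apply (Wp_self G s).2
    refine ⟨σ [], hxV, ?_⟩
    by_cases hw : Won (subP s G (σ [])) s
    · exact Or.inl hw
    · right
      exact winsAs_wp (subP s G (σ [])) s.other s (wf_subP hwf hw)
        (winsAs_step hwf hxV hleg hwin (fun _ => rfl))
  · have hps : s = p.other := by cases s <;> cases p <;> simp_all
    subst hps
    apply (Wp_other G p).2
    refine ⟨hVne, ?_⟩
    intro x hxV
    have hval1 : ValidHist G p.other [x] :=
      ⟨by simp, by simpa using hxV, fun k hk => by
        match k with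
        | 0 => exact not_ended_nil hwf p.other
        | Nat.succ k => simp at hk⟩
    have hfol1 : Follows p.other p σ [x] := by
      intro k hk hm
      match k with
      | 0 =>
        rw [mover_zero] at hm
        exact absurd hm (Player.other_ne p)
      | Nat.succ k => simp at hk
    have hnw : ¬ Won (subP p.other G x) p.other := by
      intro hwon
      rw [won_subP_self_iff] at hwon
      have hendx : ended G p.other [x] :=
        fills_to_ended (q := p.other) (by rwa [picked_singleton_self])
      have hfl := hwin [x] hval1 hfol1 (Or.inl hendx)
      rw [picked_singleton_other (Player.ne_other p)] at hfl
      rcases hfl with ⟨e, he, hes⟩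
      rcases (wf_edges hwf p e he).2 with ⟨a, ha⟩
      exact absurd (hes ha) (Finset.notMem_empty a)
    refine ⟨hnw, ?_⟩
    have hrec := winsAs_wp (subP p.other G x) p.other.other p (wf_subP hwf hnw)
      (winsAs_step hwf hxV hleg hwin (fun hm => absurd (by rwa [mover_zero] at hm)
        (Player.other_ne p)))
    rwa [Player.other_other] at hrec
termination_by G.V.card
decreasing_by
  all_goals exact subP_card_lt (by assumption) _

theorem nonLosingAs_nlp (G : Game) (s p : Player) (hwf : WellFormed G)
    (h : NonLosingAs G s p) : NLp G p s := by
  obtain ⟨σ, hleg, hnl⟩ := h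
  by_cases hsp : s = p
  · subst hsp
    apply (NLp_self G s).2
    rcases Finset.eq_empty_or_nonempty G.V with hemp | hVne
    · exact Or.inl hemp
    right
    obtain ⟨hxV, -⟩ := hleg [] (valid_nil G s) (follows_nil σ) (not_ended_nil hwf s)
      (by simpa using Finset.card_pos.2 hVne) (mover_zero s)
    refine ⟨σ [], hxV, ?_⟩
    by_cases hw : Won (subP s G (σ [])) s
    · exact Or.inl hw
    · right
      exact nonLosingAs_nlp (subP s G (σ [])) s.other s (wf_subP hwf hw)
        (nonLosing_step hwf hxV hleg hnl (fun _ => rfl))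
  · have hps : s = p.other := by cases s <;> cases p <;> simp_all
    subst hps
    apply (NLp_other G p).2
    intro x hxV
    have hval1 : ValidHist G p.other [x] :=
      ⟨by simp, by simpa using hxV, fun k hk => by
        match k with
        | 0 => exact not_ended_nil hwf p.other
        | Nat.succ k => simp at hk⟩
    have hfol1 : Follows p.other p σ [x] := by
      intro k hk hm
      match k with
      | 0 =>
        rw [mover_zero] at hm
        exact absurd hm (Player.other_ne p)
      | Nat.succ k => simp at hk
    have hnw : ¬ Won (subP p.other G x) p.other := by
      intro hwon
      rw [won_subP_self_iff] at hwon
      have hendx : ended G p.other [x] :=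
        fills_to_ended (q := p.other) (by rwa [picked_singleton_self])
      exact hnl [x] hval1 hfol1 (Or.inl hendx) (by rwa [picked_singleton_self])
    refine ⟨hnw, ?_⟩
    have hrec := nonLosingAs_nlp (subP p.other G x) p.other.other p (wf_subP hwf hnw)
      (nonLosing_step hwf hxV hleg hnl (fun hm => absurd (by rwa [mover_zero] at hm)
        (Player.other_ne p)))
    rwa [Player.other_other] at hrec
termination_by G.V.card
decreasing_by
  all_goals exact subP_card_lt (by assumption) _

end Part5

section Part6
variable {G : Game} {s p q t : Player} {x y : ℕ} {l h : List ℕ} {σ : Strategy}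

/-- The game position reached after playing the history `h` from `G`, `s` moving first. -/
def posAfter (G : Game) (s : Player) : List ℕ → Game
  | [] => G
  | x :: l => posAfter (subP s G x) s.other l

@[simp] theorem posAfter_nil (G : Game) (s : Player) : posAfter G s [] = G := rfl

theorem posAfter_snoc (G : Game) (s : Player) (h : List ℕ) (x : ℕ) :
    posAfter G s (h ++ [x]) = subP (mover s h.length) (posAfter G s h) x := by
  induction h generalizing G s with
  | nil => simp [posAfter]
  | cons y h ih =>
    show posAfter (subP s G y) s.other (h ++ [x]) = _
    rw [ih]
    have : mover s (y :: h).length = mover s.other h.length := by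
      rw [List.length_cons, mover_succ]
    rw [this]
    rfl

theorem posAfter_V (G : Game) (s : Player) (l : List ℕ) :
    (posAfter G s l).V = G.V \ l.toFinset := by
  induction l generalizing G s with
  | nil => simp
  | cons x l ih =>
    show (posAfter (subP s G x) s.other l).V = _
    rw [ih, subP_V]
    ext a
    simp only [Finset.mem_sdiff, Finset.mem_erase, List.toFinset_cons, Finset.mem_insert,
      List.mem_toFinset]
    tauto

theorem posAfter_won_iff (q : Player) (l : List ℕ) (hnd : l.Nodup) (G : Game) (s : Player) :
    Won (posAfter G s l) q ↔ fills (G.edges q) (picked s q l) := by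
  induction l generalizing G s with
  | nil => rw [picked_nil]; exact fills_empty_iff.symm
  | cons x l ih =>
    rcases List.nodup_cons.1 hnd with ⟨hxl, hnd'⟩
    show Won (posAfter (subP s G x) s.other l) q ↔ _
    rw [ih hnd', fills_picked_cons hxl]

theorem ended_posAfter (hnd : l.Nodup) :
    ended G s l ↔ Won (posAfter G s l) .L ∨ Won (posAfter G s l) .R :=
  or_congr (posAfter_won_iff .L l hnd G s).symm (posAfter_won_iff .R l hnd G s).symm

theorem won_to_ended (hnd : h.Nodup) (hw : Won (posAfter G s h) q) : ended G s h := by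
  apply (ended_posAfter hnd).2
  cases q
  · exact Or.inl hw
  · exact Or.inr hw

theorem ended_won_pair (hnd : h.Nodup) (hend : ended G s h) (p : Player) :
    Won (posAfter G s h) p ∨ Won (posAfter G s h) p.other := by
  rcases (ended_posAfter hnd).1 hend with hw | hw
  · cases p
    · exact Or.inl hw
    · exact Or.inr hw
  · cases p
    · exact Or.inr hw
    · exact Or.inl hw

theorem not_won_posAfter (hnd : h.Nodup) (hne : ¬ ended G s h) (q : Player) :
    ¬ Won (posAfter G s h) q :=
  fun hw => hne (won_to_ended hnd hw)

theorem wp_nonempty (h : Wp G p t) : G.V.Nonempty := by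
  rw [Wp] at h
  split at h
  · rcases h with ⟨x, hx, -⟩
    exact ⟨x, hx⟩
  · exact h.1

theorem valid_snoc (hv : ValidHist G s (h ++ [x])) : ValidHist G s h ∧ ¬ ended G s h := by
  obtain ⟨hnd, hmem, hend⟩ := hv
  have hlen : (h ++ [x]).length = h.length + 1 := by simp
  refine ⟨⟨hnd.sublist (List.sublist_append_left h [x]), ?_, ?_⟩, ?_⟩
  · intro a ha
    exact hmem a (List.mem_append_left _ ha)
  · intro k hk
    have := hend k (by omega)
    rwa [List.take_append_of_le_length (by omega)] at this
  · have := hend h.length (by omega)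
    rwa [List.take_append_of_le_length (le_refl _), List.take_length] at this

theorem follows_snoc (hf : Follows s p σ (h ++ [x])) : Follows s p σ h := by
  intro k hk hm
  have hlen : (h ++ [x]).length = h.length + 1 := by simp
  have := hf k (by omega) hm
  rwa [List.getD_append _ _ _ _ hk, List.take_append_of_le_length (by omega)] at this

theorem getD_append_length (h : List ℕ) (x : ℕ) : (h ++ [x]).getD h.length 0 = x := by
  rw [List.getD_append_right _ _ _ _ (le_refl _)]
  simp [List.getD]

theorem follows_snoc_last (hf : Follows s p σ (h ++ [x])) (hm : mover s h.length = p) :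
    x = σ h := by
  have := hf h.length (by simp) hm
  rwa [getD_append_length, List.take_append_of_le_length (le_refl _), List.take_length] at this

theorem not_mem_of_nodup_snoc (hnd : (h ++ [x]).Nodup) : x ∉ h := by
  intro hxh
  exact (List.nodup_append.1 hnd).2.2 x hxh x (List.mem_singleton_self x) rfl

theorem mem_pos_of_valid_snoc (hv : ValidHist G s (h ++ [x])) : x ∈ (posAfter G s h).V := by
  rw [posAfter_V, Finset.mem_sdiff, List.mem_toFinset]
  exact ⟨hv.2.1 x (List.mem_append_right _ (List.mem_singleton_self x)),
    not_mem_of_nodup_snoc hv.1⟩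

open Classical in
/-- Left's strategy extracted from the positional winning predicate. -/
noncomputable def wpStrat (G : Game) (s p : Player) : Strategy := fun h =>
  if hc : ∃ x, x ∈ (posAfter G s h).V ∧
      (Won (subP p (posAfter G s h) x) p ∨ Wp (subP p (posAfter G s h) x) p p.other)
  then hc.choose else 0

end Part6

section Part7
variable {G : Game} {s p q t : Player} {x y : ℕ} {l h : List ℕ} {σ : Strategy}

theorem wpStrat_inv (hwf : WellFormed G) (hwp : Wp G p s) :
    ∀ h, ValidHist G s h → Follows s p (wpStrat G s p) h → ¬ ended G s h →
      WellFormed (posAfter G s h) ∧ Wp (posAfter G s h) p (mover s h.length) := by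
  intro h
  induction h using List.reverseRecOn with
  | nil =>
    intro _ _ _
    refine ⟨hwf, ?_⟩
    simpa using hwp
  | append_singleton h x ih =>
    intro hv hf hne
    obtain ⟨hvh, hneh⟩ := valid_snoc hv
    have hfh := follows_snoc hf
    obtain ⟨hwfh, hwph⟩ := ih hvh hfh hneh
    have hnd : (h ++ [x]).Nodup := hv.1
    have hpos' : posAfter G s (h ++ [x]) = subP (mover s h.length) (posAfter G s h) x :=
      posAfter_snoc G s h x
    have hmov : mover s (h ++ [x]).length = (mover s h.length).other := by
      rw [List.length_append, List.length_singleton, mover_succ']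
    have hnw : ∀ q, ¬ Won (posAfter G s (h ++ [x])) q :=
      fun q => not_won_posAfter hnd hne q
    rcases Player.eq_or_eq_other (mover s h.length) p with hm | hm
    · -- p just moved
      have hx' : x = wpStrat G s p h := follows_snoc_last hf hm
      rw [hm] at hwph
      have hcond : ∃ z, z ∈ (posAfter G s h).V ∧
          (Won (subP p (posAfter G s h) z) p ∨ Wp (subP p (posAfter G s h) z) p p.other) :=
        (Wp_self _ p).1 hwph
      have hxc : x = hcond.choose := by
        rw [hx']
        simp only [wpStrat]
        rw [dif_pos hcond]
      obtain ⟨hmem, hdisj⟩ := hcond.choose_spec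
      rw [← hxc] at hmem hdisj
      have hnwp : ¬ Won (subP p (posAfter G s h) x) p := by
        have := hnw p
        rwa [hpos', hm] at this
      rw [hpos', hmov, hm]
      refine ⟨wf_subP hwfh hnwp, ?_⟩
      rcases hdisj with hwon | hwp'
      · exact absurd hwon hnwp
      · exact hwp'
    · -- the opponent just moved
      rw [hm] at hwph
      obtain ⟨-, hall⟩ := (Wp_other _ p).1 hwph
      have hxmem : x ∈ (posAfter G s h).V := mem_pos_of_valid_snoc hv
      obtain ⟨hnwon, hwp'⟩ := hall x hxmem
      rw [hpos', hmov, hm, Player.other_other]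
      exact ⟨wf_subP hwfh hnwon, hwp'⟩

theorem wpStrat_legal (hwf : WellFormed G) (hwp : Wp G p s) :
    Legal G s p (wpStrat G s p) := by
  intro h hv hf hne hlen hm
  obtain ⟨hwfh, hwph⟩ := wpStrat_inv hwf hwp h hv hf hne
  rw [hm] at hwph
  have hcond : ∃ z, z ∈ (posAfter G s h).V ∧
      (Won (subP p (posAfter G s h) z) p ∨ Wp (subP p (posAfter G s h) z) p p.other) :=
    (Wp_self _ p).1 hwph
  have hxc : wpStrat G s p h = hcond.choose := by
    simp only [wpStrat]
    rw [dif_pos hcond]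
  have hmem := hcond.choose_spec.1
  rw [← hxc, posAfter_V, Finset.mem_sdiff, List.mem_toFinset] at hmem
  exact ⟨hmem.1, hmem.2⟩

theorem wpStrat_win (hwf : WellFormed G) (hwp : Wp G p s) :
    ∀ h, ValidHist G s h → Follows s p (wpStrat G s p) h → Complete G s h →
      fills (G.edges p) (picked s p h) := by
  intro h hv hf hc
  by_cases hend : ended G s h
  · rcases List.eq_nil_or_concat h with rfl | ⟨h₀, x, rfl⟩
    · exact absurd hend (not_ended_nil hwf s)
    · simp only [List.concat_eq_append] at hv hf hend ⊢
      obtain ⟨hvh, hneh⟩ := valid_snoc hv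
      obtain ⟨hwfh, hwph⟩ := wpStrat_inv hwf hwp h₀ hvh (follows_snoc hf) hneh
      have hnd : (h₀ ++ [x]).Nodup := hv.1
      have hndh : h₀.Nodup := hvh.1
      have hpos' : posAfter G s (h₀ ++ [x]) = subP (mover s h₀.length) (posAfter G s h₀) x :=
        posAfter_snoc G s h₀ x
      rw [← posAfter_won_iff p _ hnd G s]
      rcases ended_won_pair hnd hend p with hwin | hlose
      · exact hwin
      · exfalso
        rcases Player.eq_or_eq_other (mover s h₀.length) p with hm | hm
        · rw [hpos', hm] at hlose
          exact hneh (won_to_ended hndh (won_subP_other (Player.other_ne p) hlose))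
        · rw [hm] at hwph
          obtain ⟨-, hall⟩ := (Wp_other _ p).1 hwph
          obtain ⟨hnwon, -⟩ := hall x (mem_pos_of_valid_snoc hv)
          rw [hpos', hm] at hlose
          exact hnwon hlose
  · rcases hc with hend' | hfull
    · exact absurd hend' hend
    · exfalso
      obtain ⟨hwfh, hwph⟩ := wpStrat_inv hwf hwp h hv hf hend
      have hVne := wp_nonempty hwph
      rw [posAfter_V] at hVne
      have htf : h.toFinset = G.V := by
        apply Finset.eq_of_subset_of_card_le
        · intro a ha
          exact hv.2.1 a (List.mem_toFinset.1 ha)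
        · rw [List.toFinset_card_of_nodup hv.1, hfull]
      rw [htf, Finset.sdiff_self] at hVne
      exact absurd hVne (by simp)

theorem wp_winsAs (G : Game) (s p : Player) (hwf : WellFormed G) (hwp : Wp G p s) :
    WinsAs G s p :=
  ⟨wpStrat G s p, wpStrat_legal hwf hwp, wpStrat_win hwf hwp⟩

end Part7

theorem wf_gunion {G G' : Game} (hG : WellFormed G) (hG' : WellFormed G') :
    WellFormed (gunion G G') := by
  constructor
  · intro e he
    rcases Finset.mem_union.1 he with h1 | h1
    · exact ⟨(hG.1 e h1).1.trans (Finset.subset_union_left), (hG.1 e h1).2⟩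
    · exact ⟨(hG'.1 e h1).1.trans (Finset.subset_union_right), (hG'.1 e h1).2⟩
  · intro e he
    rcases Finset.mem_union.1 he with h1 | h1
    · exact ⟨(hG.2 e h1).1.trans (Finset.subset_union_left), (hG.2 e h1).2⟩
    · exact ⟨(hG'.2 e h1).1.trans (Finset.subset_union_right), (hG'.2 e h1).2⟩

/-- If `o(G) = L` and `o(G') ∈ {L, L⁻}`, then `o(G ∪ G') = L`; in particular
Left has a winning strategy on `G ∪ G'` as second player. -/
theorem union_L_Lminus (G G' : Game) (hG : WellFormed G) (hG' : WellFormed G')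
    (hdisj : Disjoint G.V G'.V)
    (hGo : hasOutcome G oL) (hG'o : hasOutcome G' oL ∨ hasOutcome G' oLminus) :
    hasOutcome (gunion G G') oL ∧ WinsAs (gunion G G') .R .L := by
  have hWL : WinsAs G .L .L := hGo.1
  have hWR : WinsAs G .R .L := hGo.2
  have hA1 : Wp G .L .L := winsAs_wp G .L .L hG hWL
  have hA2 : Wp G .L .R := winsAs_wp G .R .L hG hWR
  have hB : NLp G' .L .R := by
    rcases hG'o with h | h
    · exact wp_nlp _ _ _ (winsAs_wp G' .R .L hG' h.2)
    · exact nonLosingAs_nlp G' .R .L hG' h.2.1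
  have hU : WellFormed (gunion G G') := wf_gunion hG hG'
  have hc := combo G G' hG hG' hdisj hA1 hA2 hB
  have hw1 : WinsAs (gunion G G') .L .L := wp_winsAs _ .L .L hU hc.1
  have hw2 : WinsAs (gunion G G') .R .L := wp_winsAs _ .R .L hU hc.2
  exact ⟨⟨hw1, hw2⟩, hw2⟩
end APG
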